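/- (Discrete Poisson summation identity for exponential sums.) Let γ > 0, 0 < δ ≤ π/γ, and let G ∈ H¹₀(−γ, γ) with Fourier transform g(t) = ∫ G(x) e^{−itx} dx. Let (ω_k) be a strictly increasing sequence of reals and x(t) = Σ_k x_k e^{iω_k t} a finite sum whose coefficients satisfy x_k = 0 whenever |ω_k| > π/δ − γ/2. Then δ·Σ_{j∈ℤ} g(jδ)|x(jδ)|² = 2π·Σ_{k,n} G(ω_k − ω_n)·x_k·conj(x_n). -/

import Mathlib

open MeasureTheory Real Complex

/-- Discrete Poisson summation identity for exponential sums. -/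
theorem discrete_poisson_identity (γ δ : ℝ) (hγ : 0 < γ) (hδ : 0 < δ)
    (hδγ : δ ≤ Real.pi / γ)
    -- `G ∈ H¹₀(-γ, γ)` : continuous, vanishing outside `(-γ, γ)`,
    -- with derivative `G'` in `L²`
    (G G' : ℝ → ℝ) (hGsupp : ∀ x : ℝ, γ ≤ |x| → G x = 0)
    (hGderiv : ∀ x : ℝ, HasDerivAt G (G' x) x)
    (hG'L2 : MeasureTheory.MemLp G' 2 MeasureTheory.volume)
    -- Fourier transform of `G`
    (g : ℝ → ℂ)
    (hg : ∀ t : ℝ, g t = ∫ x : ℝ, (G x : ℂ) * Complex.exp (-(t * x) * Complex.I))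
    -- exponents and coefficients
    (ω : ℤ → ℝ) (hω : StrictMono ω)
    (s : Finset ℤ) (c : ℤ → ℂ) (hc : ∀ k ∉ s, c k = 0)
    (hcut : ∀ k : ℤ, Real.pi / δ - γ / 2 < |ω k| → c k = 0)
    (x : ℝ → ℂ)
    (hx : ∀ t : ℝ, x t = ∑ k ∈ s, c k * Complex.exp (Complex.I * (ω k * t))) :
    (δ : ℂ) * ∑' j : ℤ, g ((j : ℝ) * δ) * ((‖x ((j : ℝ) * δ)‖ : ℂ) ^ 2) =
      2 * (Real.pi : ℂ) *
        ∑ k ∈ s, ∑ n ∈ s, (G (ω k - ω n) : ℂ) * c k * (starRingEnd ℂ) (c n) := by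
  classical
  have hπ : (0:ℝ) < π := Real.pi_pos
  set T : ℝ := 2 * π / δ with hTdef
  have hT : 0 < T := by positivity
  haveI : Fact (0 < T) := ⟨hT⟩
  set a : ℝ := -(π / δ) with hadef
  have hab : a < a + T := lt_add_of_pos_right a hT
  have haT : a + T = π / δ := by rw [hadef, hTdef]; ring
  have hγπ : γ ≤ π / δ := by
    rw [le_div_iff₀ hδ]
    have := (le_div_iff₀ hγ).1 hδγ
    linarith
  have hGcont : Continuous G := continuous_iff_continuousAt.2 fun t => (hGderiv t).continuousAt
  set Gc : ℝ → ℂ := fun r => (G r : ℂ) with hGc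
  have hG0 : ∀ r : ℝ, γ ≤ |r| → Gc r = 0 := by
    intro r hr; simp [hGc, hGsupp r hr]
  have hGa : Gc a = 0 := hG0 a (by rw [hadef, abs_neg, abs_of_pos (by positivity)]; exact hγπ)
  have hGaT : Gc (a + T) = 0 := hG0 _ (by rw [haT, abs_of_pos (by positivity)]; exact hγπ)
  set F : AddCircle T → ℂ := AddCircle.liftIco T a Gc with hF
  have hFcont : Continuous F :=
    AddCircle.liftIco_continuous (by rw [hGa, hGaT]) 
      ((Complex.continuous_ofReal.comp hGcont).continuousOn)
  have hcF : ∀ n : ℤ, fourierCoeff F n = fourierCoeffOn hab Gc n := by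
    intro n; exact fourierCoeff_liftIco_eq Gc n
  have hδ0 : (δ:ℂ) ≠ 0 := Complex.ofReal_ne_zero.mpr hδ.ne'
  have hπ0 : (π:ℂ) ≠ 0 := Complex.ofReal_ne_zero.mpr hπ.ne'
  have hexp : ∀ (n : ℤ) (r : ℝ),
      (fourier (-n) ((r : ℝ) : AddCircle (a + T - a)) : ℂ)
        = Complex.exp (-(((n : ℝ) * δ : ℝ) * r) * Complex.I) := by
    intro n r
    rw [fourier_coe_apply]
    congr 1
    have : a + T - a = T := by ring
    rw [this, hTdef]
    push_cast
    field_simp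
  have hgF : ∀ n : ℤ, g ((n:ℝ) * δ) = (T:ℂ) * fourierCoeff F n := by
    intro n
    have hvan : ∀ r : ℝ, r ∉ Set.Ioc a (a + T) →
        Gc r * Complex.exp (-(((n:ℝ) * δ : ℝ) * r) * Complex.I) = 0 := by
      intro r hr
      have : γ ≤ |r| := by
        rw [Set.mem_Ioc, not_and_or] at hr
        rcases hr with h | h
        · push_neg at h
          refine le_abs.2 (Or.inr ?_)
          rw [hadef] at h
          linarith
        · push_neg at h
          rw [haT] at h
          exact le_abs.2 (Or.inl (by linarith))
      rw [hG0 r this, zero_mul]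
    have h1 : (∫ r : ℝ, Gc r * Complex.exp (-(((n:ℝ) * δ : ℝ) * r) * Complex.I))
        = ∫ r in a..(a + T), Gc r * Complex.exp (-(((n:ℝ) * δ : ℝ) * r) * Complex.I) := by
      rw [intervalIntegral.integral_of_le hab.le,
        setIntegral_eq_integral_of_forall_compl_eq_zero hvan]
    have h2 : fourierCoeffOn hab Gc n = (1 / (a + T - a) : ℝ) •
        ∫ r in a..(a + T), Gc r * Complex.exp (-(((n:ℝ) * δ : ℝ) * r) * Complex.I) := by
      rw [fourierCoeffOn_eq_integral]
      congr 1
      apply intervalIntegral.integral_congr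
      intro r _
      simp only [smul_eq_mul]
      rw [hexp n r, mul_comm]
    have h3 : g ((n:ℝ) * δ) = ∫ r : ℝ, Gc r * Complex.exp (-(((n:ℝ) * δ : ℝ) * r) * Complex.I) := by
      exact hg _
    rw [h3, h1, hcF n, h2, real_smul]
    have h4 : a + T - a = T := by ring
    rw [h4]
    push_cast
    have hT0 : (T:ℂ) ≠ 0 := Complex.ofReal_ne_zero.mpr hT.ne'
    field_simp
    congr 1
    ext r
    ring_nf
  -- derivative: measurability and integrability
  have hG'eq : G' = deriv G := funext fun t => ((hGderiv t).deriv).symm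
  have hG'meas : Measurable G' := by rw [hG'eq]; exact measurable_deriv G
  set G'c : ℝ → ℂ := fun r => (G' r : ℂ) with hG'c
  have hG'cmeas : Measurable G'c := Complex.measurable_ofReal.comp hG'meas
  have hG'int : IntervalIntegrable G'c volume a (a + T) := by
    haveI : IsFiniteMeasure (volume.restrict (Set.Ioc a (a + T))) :=
      ⟨by rw [Measure.restrict_apply_univ]; exact measure_Ioc_lt_top⟩
    have h2 : MemLp G' 2 (volume.restrict (Set.Ioc a (a + T))) := hG'L2.restrict _
    have h1 : Integrable G' (volume.restrict (Set.Ioc a (a + T))) :=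
      memLp_one_iff_integrable.1 (h2.mono_exponent (by norm_num))
    exact (intervalIntegrable_iff_integrableOn_Ioc_of_le hab.le).2 h1.ofReal
  set b : ℤ → ℂ := fun n => fourierCoeffOn hab G'c n with hbdef
  have hb : Summable (fun n : ℤ => ‖b n‖ ^ 2) := by
    set φ : AddCircle T → ℂ := AddCircle.liftIoc T a G'c with hφdef
    have hφmeas : Measurable φ := by
      have h : φ = (fun y : Set.Ioc a (a + T) => G'c (y : ℝ)) ∘
          (AddCircle.measurableEquivIoc T a) := rfl
      rw [h]
      exact (hG'cmeas.comp measurable_subtype_coe).comp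
        (AddCircle.measurableEquivIoc T a).measurable
    have hmp := AddCircle.measurePreserving_mk T a
    have hcomp : MemLp (φ ∘ ((↑) : ℝ → AddCircle T)) 2
        (volume.restrict (Set.Ioc a (a + T))) := by
      have hmem : MemLp G'c 2 (volume.restrict (Set.Ioc a (a + T))) :=
        (hG'L2.restrict _).ofReal
      apply hmem.ae_eq
      filter_upwards [ae_restrict_mem measurableSet_Ioc] with r hr
      exact (AddCircle.liftIoc_coe_apply hr).symm
    have hφL2vol : MemLp φ 2 (volume : Measure (AddCircle T)) := by
      rw [← hmp.map_eq]
      exact (memLp_map_measure_iff hφmeas.aestronglyMeasurable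
        AddCircle.measurable_mk'.aemeasurable).2 hcomp
    have hφL2 : MemLp φ 2 (AddCircle.haarAddCircle) := by
      have hne : (ENNReal.ofReal T) ≠ 0 := (ENNReal.ofReal_pos.2 hT).ne'
      have hvol : (AddCircle.haarAddCircle : Measure (AddCircle T))
          = (ENNReal.ofReal T)⁻¹ • (volume : Measure (AddCircle T)) := by
        rw [AddCircle.volume_eq_smul_haarAddCircle, ← smul_assoc, smul_eq_mul,
          ENNReal.inv_mul_cancel hne ENNReal.ofReal_ne_top, one_smul]
      rw [hvol]
      exact hφL2vol.smul_measure (ENNReal.inv_ne_top.2 hne)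
    have hrepr : ∀ n : ℤ, fourierCoeff ((hφL2.toLp φ) : AddCircle T → ℂ) n = b n := by
      intro n
      have h1 : fourierCoeff ((hφL2.toLp φ) : AddCircle T → ℂ) n = fourierCoeff φ n := by
        apply integral_congr_ae
        filter_upwards [hφL2.coeFn_toLp] with t ht
        rw [ht]
      rw [h1, hφdef, hbdef]
      exact fourierCoeff_liftIoc_eq G'c n
    have hsum2 := (lp.memℓp (fourierBasis.repr (hφL2.toLp φ))).summable
      (by norm_num : (0:ℝ) < ENNReal.toReal 2)
    have h2 : (ENNReal.toReal 2) = ((2:ℕ) : ℝ) := by norm_num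
    simp only [h2, Real.rpow_natCast, fourierBasis_repr, hrepr] at hsum2
    exact_mod_cast hsum2
  have hsummF : Summable (fourierCoeff F) := by
    have hgsum : Summable (fun n : ℤ => T / (4 * π) * (1 / (n:ℝ)^2 + ‖b n‖^2)) :=
      (((summable_one_div_int_pow).2 (by norm_num)).add hb).mul_left _
    apply Summable.of_norm_bounded_eventually hgsum
    rw [Filter.eventually_cofinite]
    apply Set.Finite.subset (Set.finite_singleton (0 : ℤ))
    intro n hn
    simp only [Set.mem_setOf_eq] at hn
    by_contra hn0
    apply hn
    have hnne : n ≠ 0 := by simpa using hn0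
    have hd := fourierCoeffOn_of_hasDerivAt hab hnne
      (fun r _ => HasDerivAt.ofReal_comp (hGderiv r)) hG'int
    rw [hcF n, hd]
    have hz : Gc (a + T) - Gc a = 0 := by rw [hGa, hGaT]; ring
    rw [hz, mul_zero, zero_sub, norm_mul, norm_neg, norm_mul]
    have h1 : ‖(1 : ℂ) / (-2 * ↑π * Complex.I * ↑n)‖ = 1 / (2 * π * |(n:ℝ)|) := by
      rw [norm_div, norm_one]
      simp [abs_of_pos hπ]
    rw [h1]
    have hbn : fourierCoeffOn hab G'c n = b n := rfl
    rw [hbn]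
    have hTc : ‖((a + T : ℝ) : ℂ) - ((a:ℝ):ℂ)‖ = T := by
      rw [← Complex.ofReal_sub, Complex.norm_real]
      have h5 : a + T - a = T := by ring
      rw [h5, Real.norm_eq_abs, abs_of_pos hT]
    rw [hTc]
    set m := |(n:ℝ)| with hmdef
    have hm1 : (1:ℝ) ≤ m := by
      rw [hmdef, ← Int.cast_abs]
      exact_mod_cast Int.one_le_abs hnne
    have hm0 : (0:ℝ) < m := lt_of_lt_of_le zero_lt_one hm1
    have hsq : ((n:ℝ))^2 = m^2 := (_root_.sq_abs (n:ℝ)).symm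
    rw [hsq]
    set A := ‖b n‖ with hA
    have hA0 : (0:ℝ) ≤ A := norm_nonneg _
    calc 1 / (2 * π * m) * (T * A) = T / (4 * π) * (2 * A * (1/m)) := by
          field_simp
          ring
      _ ≤ T / (4 * π) * (1 / m ^ 2 + A ^ 2) := by
          apply mul_le_mul_of_nonneg_left ?_ (by positivity)
          have h2 : (1/m)^2 = 1/m^2 := by rw [div_pow, one_pow]
          nlinarith [sq_nonneg (1/m - A)]
  have hT2 : T / 2 = π / δ := by rw [hTdef]; ring
  have hFeval : ∀ r : ℝ, |r| ≤ T - γ → F ((r : ℝ) : AddCircle T) = Gc r := by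
    intro r hr
    set y := toIcoMod hT a r with hydef
    have hy_mem : y ∈ Set.Ico a (a + T) := toIcoMod_mem_Ico hT a r
    have hsub : r - y = toIcoDiv hT a r • T := by
      rw [hydef, toIcoMod]; ring
    have hcoe : ((r : ℝ) : AddCircle T) = ((y : ℝ) : AddCircle T) := by
      apply (QuotientAddGroup.eq_iff_sub_mem).2
      exact (AddSubgroup.mem_zmultiples_iff).2 ⟨toIcoDiv hT a r, hsub.symm⟩
    rw [hcoe, hF, AddCircle.liftIco_coe_apply hy_mem]
    rcases eq_or_ne (toIcoDiv hT a r) 0 with h0 | h0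
    · have : y = r := by rw [hydef, toIcoMod, h0]; simp
      rw [this]
    · have habs : T ≤ |r - y| := by
        rw [hsub, zsmul_eq_mul, abs_mul, abs_of_pos hT]
        have : (1:ℝ) ≤ |(toIcoDiv hT a r : ℝ)| := by
          rw [← Int.cast_abs]
          exact_mod_cast Int.one_le_abs h0
        nlinarith
      have hyabs : |y| ≤ T / 2 := by
        rw [abs_le]
        constructor
        · have := hy_mem.1
          rw [hadef] at this
          rw [hT2]
          linarith
        · have := hy_mem.2.le
          rw [haT] at this
          rw [hT2]
          linarith
      have htri : |r - y| ≤ |r| + |y| := by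
        have := abs_add_le r (-y)
        simpa [sub_eq_add_neg] using this
      have hγT2 : γ ≤ T / 2 := by rw [hT2]; exact hγπ
      have h1 : γ ≤ |y| := by linarith
      have h2 : γ ≤ |r| := by linarith
      rw [hG0 y h1, hG0 r h2]
  have hps : ∀ r : ℝ, HasSum (fun j : ℤ => fourierCoeff F j * fourier j ((r : ℝ) : AddCircle T))
      (F ((r : ℝ) : AddCircle T)) := by
    intro r
    have := has_pointwise_sum_fourier_series_of_summable
      (f := ⟨F, hFcont⟩) hsummF ((r : ℝ) : AddCircle T)
    simpa [smul_eq_mul] using this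
  have hfour : ∀ (j : ℤ) (r : ℝ), (fourier j ((r : ℝ) : AddCircle T) : ℂ)
      = Complex.exp (Complex.I * ((r:ℂ) * ((((j:ℝ) * δ : ℝ)):ℂ))) := by
    intro j r
    rw [fourier_coe_apply]
    congr 1
    rw [hTdef]
    push_cast
    field_simp
  have hterm : ∀ j : ℤ, g ((j:ℝ)*δ) * ((‖x ((j:ℝ)*δ)‖ : ℂ)) ^ 2
      = ∑ k ∈ s, ∑ n ∈ s, (T:ℂ) * (c k * (starRingEnd ℂ) (c n)) *
          (fourierCoeff F j * fourier j ((ω k - ω n : ℝ) : AddCircle T)) := by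
    intro j
    have h1 : ((‖x ((j:ℝ)*δ)‖ : ℂ)) ^ 2 = x ((j:ℝ)*δ) * (starRingEnd ℂ) (x ((j:ℝ)*δ)) := by
      rw [Complex.mul_conj, Complex.normSq_eq_norm_sq]
      push_cast
      ring
    have hx2 : ((‖x ((j:ℝ)*δ)‖ : ℂ)) ^ 2
        = ∑ k ∈ s, ∑ n ∈ s, (c k * (starRingEnd ℂ) (c n)) *
            fourier j ((ω k - ω n : ℝ) : AddCircle T) := by
      rw [h1, hx, map_sum, Finset.sum_mul_sum]
      apply Finset.sum_congr rfl; intro k _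
      apply Finset.sum_congr rfl; intro n _
      rw [map_mul, ← Complex.exp_conj]
      rw [hfour j (ω k - ω n)]
      rw [mul_mul_mul_comm]
      congr 1
      rw [← Complex.exp_add]
      congr 1
      simp only [map_mul, Complex.conj_I, Complex.conj_ofReal]
      push_cast
      ring
    rw [hgF j, hx2, Finset.mul_sum]
    apply Finset.sum_congr rfl; intro k _
    rw [Finset.mul_sum]
    apply Finset.sum_congr rfl; intro n _
    ring
  have hsumm_kn : ∀ k n : ℤ, Summable (fun j : ℤ =>
      (T:ℂ) * (c k * (starRingEnd ℂ) (c n)) *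
        (fourierCoeff F j * fourier j ((ω k - ω n : ℝ) : AddCircle T))) :=
    fun k n => ((hps (ω k - ω n)).summable).mul_left _
  have hLHS : ∑' j : ℤ, g ((j:ℝ)*δ) * ((‖x ((j:ℝ)*δ)‖ : ℂ)) ^ 2
      = ∑ k ∈ s, ∑ n ∈ s, (T:ℂ) * (c k * (starRingEnd ℂ) (c n)) *
          F ((ω k - ω n : ℝ) : AddCircle T) := by
    rw [tsum_congr hterm]
    rw [Summable.tsum_finsetSum (fun k _ => summable_sum (fun n _ => hsumm_kn k n))]
    apply Finset.sum_congr rfl; intro k _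
    rw [Summable.tsum_finsetSum (fun n _ => hsumm_kn k n)]
    apply Finset.sum_congr rfl; intro n _
    exact ((hps (ω k - ω n)).mul_left _).tsum_eq
  rw [hLHS, Finset.mul_sum, Finset.mul_sum]
  apply Finset.sum_congr rfl; intro k _
  rw [Finset.mul_sum, Finset.mul_sum]
  apply Finset.sum_congr rfl; intro n _
  by_cases hk0 : c k = 0
  · simp [hk0]
  by_cases hn0 : c n = 0
  · simp [hn0]
  have h1 : |ω k| ≤ π/δ - γ/2 := le_of_not_gt (fun h => hk0 (hcut k h))
  have h2 : |ω n| ≤ π/δ - γ/2 := le_of_not_gt (fun h => hn0 (hcut n h))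
  have h3 : |ω k - ω n| ≤ T - γ := by
    have h4 : |ω k - ω n| ≤ |ω k| + |ω n| := by
      have := abs_add_le (ω k) (-(ω n)); simpa [sub_eq_add_neg] using this
    have h5 : T = 2 * (π/δ) := by rw [hTdef]; ring
    rw [h5]; linarith
  rw [hFeval _ h3]
  have hδT : (δ:ℂ) * (T:ℂ) = 2 * (π:ℂ) := by
    rw [hTdef]; push_cast; field_simp
  simp only [hGc]
  linear_combination (c k * (starRingEnd ℂ) (c n) * ((G (ω k - ω n) : ℂ))) * hδT
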